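/- Let Γ ↷ X be an amenable action of a countable group on a countable set. If the action has infinite orbits, then there exists a Følner sequence (C_n) for the action such that |C_n| → ∞. -/

import Mathlib

/-- `C` is a Følner sequence for the action of `G` on `X` given by `π`. -/
def IsFolnerSeq {G X : Type*} [Group G] (π : G →* Equiv.Perm X) (C : ℕ → Set X) : Prop :=
  (∀ n, (C n).Finite ∧ (C n).Nonempty) ∧
    ∀ g : G, Filter.Tendsto
      (fun n => ((symmDiff (C n) (π g '' C n)).ncard : ℝ) / (C n).ncard)
      Filter.atTop (nhds 0)

/-- The action of `G` on `X` given by `π` is amenable (admits a Følner sequence). -/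
def IsAmenableAction {G X : Type*} [Group G] (π : G →* Equiv.Perm X) : Prop :=
  ∃ C : ℕ → Set X, IsFolnerSeq π C

/-- The action given by `π` has infinite orbits. -/
def HasInfiniteOrbits {G X : Type*} [Group G] (π : G →* Equiv.Perm X) : Prop :=
  ∀ x : X, {y : X | ∃ g : G, π g x = y}.Infinite

/-- The action given by `π` is transitive. -/
def IsTransitiveAction {G X : Type*} [Group G] (π : G →* Equiv.Perm X) : Prop :=
  ∀ x y : X, ∃ g : G, π g x = y

/-- The action given by `π` is almost free: every non-trivial element has finitely many
fixed points. -/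
def IsAlmostFreeAction {G X : Type*} [Group G] (π : G →* Equiv.Perm X) : Prop :=
  ∀ g : G, g ≠ 1 → {x : X | π g x = x}.Finite

/-- The class 𝒜 of countable groups admitting a faithful, transitive and amenable action
on an infinite countable set. -/
def InClassA (G : Type*) [Group G] : Prop :=
  ∃ (X : Type) (_ : Countable X) (_ : Infinite X) (π : G →* Equiv.Perm X),
    Function.Injective π ∧ IsTransitiveAction π ∧ IsAmenableAction π

/-- The class 𝒜_ℱ of countable groups admitting an amenable, almost free action with
infinite orbits on a countable set. -/
def InClassAF (G : Type*) [Group G] : Prop :=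
  ∃ (X : Type) (_ : Countable X) (π : G →* Equiv.Perm X),
    IsAmenableAction π ∧ IsAlmostFreeAction π ∧ HasInfiniteOrbits π

open Filter Set

private lemma folner_key {Γ X : Type*} [Group Γ] (π : Γ →* Equiv.Perm X)
    (hinf : HasInfiniteOrbits π) (F : ℕ → Set X) (hF : IsFolnerSeq π F)
    (S : Set Γ) (hS : S.Finite) {ε : ℝ} (hε : 0 < ε) (k : ℕ) :
    ∃ C : Set X, C.Finite ∧ C.Nonempty ∧ k ≤ C.ncard ∧
      ∀ g ∈ S, ((symmDiff C (π g '' C)).ncard : ℝ) ≤ ε * C.ncard := by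
  classical
  obtain ⟨hFfin, hFtend⟩ := hF
  by_cases hA : ∀ N, ∃ n, N ≤ n ∧ k ≤ (F n).ncard
  · -- Case A: Følner sets of size ≥ k occur arbitrarily late
    have hev : ∀ᶠ n in atTop, ∀ g ∈ S,
        ((symmDiff (F n) (π g '' F n)).ncard : ℝ) / (F n).ncard < ε :=
      (Filter.eventually_all_finite hS).2 fun g _ => (hFtend g).eventually (Iio_mem_nhds hε)
    obtain ⟨N, hN⟩ := Filter.eventually_atTop.1 hev
    obtain ⟨n, hn, hk⟩ := hA N
    refine ⟨F n, (hFfin n).1, (hFfin n).2, hk, fun g hg => ?_⟩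
    have hpos : (0:ℝ) < (F n).ncard := by
      exact_mod_cast (Set.ncard_pos (hFfin n).1).2 (hFfin n).2
    have h1 := (hN n hn g hg).le
    rw [div_le_iff₀ hpos] at h1
    linarith [h1]
  · push_neg at hA
    obtain ⟨N₀, hN₀⟩ := hA
    have hk0 : 0 < k := lt_of_le_of_lt (Nat.zero_le _)
      (lt_of_le_of_lt ((Set.ncard_pos (hFfin N₀).1).2 (hFfin N₀).2) (hN₀ N₀ le_rfl))
    -- Eventual exact invariance
    have hinv : ∀ g : Γ, ∀ᶠ n in atTop, π g '' F n = F n := by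
      intro g
      have h1 : ∀ᶠ n in atTop,
          ((symmDiff (F n) (π g '' F n)).ncard : ℝ) / (F n).ncard < 1 / k :=
        (hFtend g).eventually (Iio_mem_nhds (by positivity))
      filter_upwards [h1, eventually_ge_atTop N₀] with n hr hn
      by_contra hne
      have hDfin : (symmDiff (F n) (π g '' F n)).Finite :=
        ((hFfin n).1.union ((hFfin n).1.image _)).subset symmDiff_le_sup
      have hDne : (symmDiff (F n) (π g '' F n)).Nonempty := by
        rw [Set.nonempty_iff_ne_empty]
        intro h
        exact hne (symmDiff_eq_bot.1 h).symm
      have h2 : (1:ℝ) ≤ (symmDiff (F n) (π g '' F n)).ncard := by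
        exact_mod_cast (Set.ncard_pos hDfin).2 hDne
      have h3 : (0:ℝ) < (F n).ncard := by
        exact_mod_cast (Set.ncard_pos (hFfin n).1).2 (hFfin n).2
      have h4 : ((F n).ncard : ℝ) ≤ k := by exact_mod_cast (hN₀ n hn).le
      have h5 : (1:ℝ)/k ≤ ((symmDiff (F n) (π g '' F n)).ncard : ℝ) / (F n).ncard :=
        div_le_div₀ (by positivity) h2 h3 h4
      linarith
    -- Tail unions are infinite
    have htail : ∀ M : ℕ, (⋃ i ∈ Set.Ici M, F i).Infinite := by
      intro M
      by_contra h
      rw [Set.not_infinite] at h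
      set U : ℕ → Set X := fun j => ⋃ i ∈ Set.Ici (M + j), F i with hU
      have hUsub : ∀ j, U j ⊆ U 0 := by
        intro j
        exact Set.biUnion_subset_biUnion_left (fun i hi => Set.mem_Ici.2 (le_trans (show M + 0 ≤ M + j by omega) (Set.mem_Ici.1 hi)))
      have hU0 : U 0 = ⋃ i ∈ Set.Ici M, F i := by simp [hU]
      have hUfin : ∀ j, (U j).Finite := fun j => (hU0 ▸ h).subset (hUsub j)
      have hUanti : ∀ j j', j ≤ j' → U j' ⊆ U j := by
        intro j j' hjj
        exact Set.biUnion_subset_biUnion_left (fun i hi => Set.mem_Ici.2 (le_trans (show M + j ≤ M + j' by omega) (Set.mem_Ici.1 hi)))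
      have hex : ∃ m, ∃ j, (U j).ncard = m := ⟨(U 0).ncard, 0, rfl⟩
      obtain ⟨j₀, hj₀⟩ := Nat.find_spec hex
      have hmin : ∀ j, Nat.find hex ≤ (U j).ncard := fun j => Nat.find_min' hex ⟨j, rfl⟩
      have hstab : ∀ j, j₀ ≤ j → U j = U j₀ := by
        intro j hj
        refine Set.eq_of_subset_of_ncard_le (hUanti j₀ j hj) ?_ (hUfin j₀)
        rw [hj₀]
        exact hmin j
      have hVinv : ∀ g : Γ, π g '' U j₀ = U j₀ := by
        intro g
        obtain ⟨Ng, hNg⟩ := eventually_atTop.1 (hinv g)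
        have hj : U (max j₀ Ng) = U j₀ := hstab _ (le_max_left _ _)
        rw [← hj, hU]
        rw [Set.image_iUnion₂]
        refine Set.iUnion₂_congr fun i hi => ?_
        exact hNg i (le_trans (le_trans (le_max_right _ _) (Nat.le_add_left _ _)) hi)
      obtain ⟨x, hx⟩ := (hFfin (M + j₀)).2
      have hxU : x ∈ U j₀ := Set.mem_biUnion (Set.mem_Ici.2 le_rfl) hx
      have horb : {y : X | ∃ g : Γ, π g x = y} ⊆ U j₀ := by
        rintro y ⟨g, rfl⟩
        rw [← hVinv g]
        exact Set.mem_image_of_mem _ hxU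
      exact ((hUfin j₀).subset horb).not_infinite (hinf x)
    -- Build a large invariant set
    have hSinv : ∀ᶠ n in atTop, ∀ g ∈ S, π g '' F n = F n :=
      (Filter.eventually_all_finite hS).2 fun g _ => hinv g
    obtain ⟨M, hM⟩ := eventually_atTop.1 hSinv
    obtain ⟨t, htsub, htfin, htcard⟩ := (htail M).exists_subset_ncard_eq (max k 1)
    have hmem : ∀ x ∈ t, ∃ i, M ≤ i ∧ x ∈ F i := by
      intro x hx
      have := htsub hx
      simpa [Set.mem_iUnion] using this
    choose! f hf1 hf2 using hmem
    refine ⟨⋃ x ∈ t, F (f x), htfin.biUnion (fun x _ => (hFfin (f x)).1), ?_, ?_, ?_⟩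
    · obtain ⟨x, hx⟩ := Set.nonempty_of_ncard_ne_zero (by omega : t.ncard ≠ 0)
      exact ⟨x, Set.mem_biUnion hx (hf2 x hx)⟩
    · have hsub : t ⊆ ⋃ x ∈ t, F (f x) := fun x hx => Set.mem_biUnion hx (hf2 x hx)
      calc k ≤ max k 1 := le_max_left _ _
        _ = t.ncard := htcard.symm
        _ ≤ _ := Set.ncard_le_ncard hsub (htfin.biUnion (fun x _ => (hFfin (f x)).1))
    · intro g hg
      have himg : π g '' (⋃ x ∈ t, F (f x)) = ⋃ x ∈ t, F (f x) := by
        rw [Set.image_iUnion₂]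
        exact Set.iUnion₂_congr fun x hx => hM (f x) (hf1 x hx) g hg
      rw [himg, symmDiff_self]
      simp only [Set.bot_eq_empty, Set.ncard_empty, Nat.cast_zero]
      positivity

/-- **Lemma 2.1.** Let `Γ ↷ X` be an amenable action of a countable group on a countable
set.  If the action has infinite orbits then there exists a Følner sequence `(C n)` with
`|C n| → ∞`. -/
theorem exists_folner_seq_card_tendsto_atTop
    {Γ X : Type*} [Group Γ] [Countable Γ] [Countable X]
    (π : Γ →* Equiv.Perm X)
    (hamen : IsAmenableAction π) (hinf : HasInfiniteOrbits π) :
    ∃ C : ℕ → Set X, IsFolnerSeq π C ∧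
      Filter.Tendsto (fun n => (C n).ncard) Filter.atTop Filter.atTop := by
  obtain ⟨F, hF⟩ := hamen
  obtain ⟨e, he⟩ := exists_surjective_nat Γ
  have hkey : ∀ n : ℕ, ∃ C : Set X, C.Finite ∧ C.Nonempty ∧ n ≤ C.ncard ∧
      ∀ g ∈ e '' Set.Iic n, ((symmDiff C (π g '' C)).ncard : ℝ) ≤ (1/(n+1)) * C.ncard :=
    fun n => folner_key π hinf F hF (e '' Set.Iic n) ((Set.finite_Iic n).image e)
      (by positivity) n
  choose C hCfin hCne hCcard hCsd using hkey
  refine ⟨C, ⟨fun n => ⟨hCfin n, hCne n⟩, ?_⟩, ?_⟩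
  · intro g
    obtain ⟨j, rfl⟩ := he g
    have hb : ∀ n, j ≤ n →
        ((symmDiff (C n) (π (e j) '' C n)).ncard : ℝ) / (C n).ncard ≤ 1/(n+1) := by
      intro n hn
      have hpos : (0:ℝ) < (C n).ncard := by
        exact_mod_cast (Set.ncard_pos (hCfin n)).2 (hCne n)
      rw [div_le_iff₀ hpos]
      exact hCsd n (e j) ⟨j, Set.mem_Iic.2 hn, rfl⟩
    refine squeeze_zero' ?_ ?_ tendsto_one_div_add_atTop_nhds_zero_nat
    · exact Filter.Eventually.of_forall fun n => by positivity
    · filter_upwards [eventually_ge_atTop j] with n hn using hb n hn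
  · exact Filter.tendsto_atTop_mono (fun n => hCcard n) Filter.tendsto_id
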